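/- Let L = (V, R, S, τ, d, n) be an L-system of size ℓ whose underlying morphism is expanding (|R(A)| ≥ 2 for every A ∈ V), whose axiom is a single symbol, and which generates its full coded level, i.e., w = τ(L_d) with n = |L_d|. Then d ≤ log₂ n, and there exists a context-free grammar of size at most (⌊log₂ n⌋ + 1)·ℓ generating w; hence the grammar has size O(ℓ log n). -/

import Mathlib

/-- The homomorphic extension of a morphism `R : V → V⁺` to strings. -/
def morphApply {V : Type} (R : V → List V) (w : List V) : List V := w.flatMap R

/-- An L-system `(V, R, S, τ, d, n)`: a rule per symbol, an axiom, a coding `τ`,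
a level `d` where to stop, and the length `n` of the string to generate. -/
structure LSystem (V Γ : Type) where
  R : V → List V
  ax : List V
  coding : V → Γ
  d : ℕ
  n : ℕ

/-- The levels of an L-system: `L_0 = S` and `L_{i+1} = R(L_i)`. -/
def LSystem.level {V Γ : Type} (L : LSystem V Γ) (i : ℕ) : List V :=
  (morphApply L.R)^[i] L.ax

-- aux lemmas
lemma morphApply_nil {V : Type} (R : V → List V) : morphApply R [] = [] := rfl

lemma morphApply_append {V : Type} (R : V → List V) (u v : List V) :
    morphApply R (u ++ v) = morphApply R u ++ morphApply R v :=
  List.flatMap_append ..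

lemma morphApply_iterate_nil {V : Type} (R : V → List V) (i : ℕ) :
    (morphApply R)^[i] [] = [] := by
  induction i with
  | zero => rfl
  | succ i ih => rw [Function.iterate_succ_apply, morphApply_nil, ih]

lemma morphApply_iterate_append {V : Type} (R : V → List V) (i : ℕ) (u v : List V) :
    (morphApply R)^[i] (u ++ v) = (morphApply R)^[i] u ++ (morphApply R)^[i] v := by
  induction i generalizing u v with
  | zero => rfl
  | succ i ih => rw [Function.iterate_succ_apply, Function.iterate_succ_apply,
      Function.iterate_succ_apply, morphApply_append, ih]

lemma morphApply_iterate_flatMap {V : Type} (R : V → List V) (i : ℕ) (l : List V) :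
    (morphApply R)^[i] l = l.flatMap (fun B => (morphApply R)^[i] [B]) := by
  induction l with
  | nil => simp [morphApply_iterate_nil]
  | cons a t ih =>
    have h : (a :: t) = [a] ++ t := rfl
    rw [h, morphApply_iterate_append, ih, List.flatMap_append]
    simp

lemma morphApply_single {V : Type} (R : V → List V) (A : V) :
    morphApply R [A] = R A := by simp [morphApply]

lemma aux_pos {m d k : ℕ} (hk : k < m * (d+1)) : 0 < m := by
  cases m with
  | zero => simp at hk
  | succ _ => exact Nat.succ_pos _

lemma aux_div_lt {m d k : ℕ} (hk : k < m * (d+1)) : k / m < d + 1 :=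
  (Nat.div_lt_iff_lt_mul (aux_pos hk)).2 (by rw [mul_comm]; exact hk)

lemma aux_div {m i b : ℕ} (hb : b < m) : (b + m * i) / m = i := by
  rw [Nat.add_mul_div_left _ _ (by omega : 0 < m), Nat.div_eq_of_lt hb, Nat.zero_add]

lemma aux_mod {m i b : ℕ} (hb : b < m) : (b + m * i) % m = b := by
  rw [Nat.add_mul_mod_self_left, Nat.mod_eq_of_lt hb]

section Construction

variable {V Γ : Type} [Fintype V]

/-- number of nonterminals -/
def lsr {V Γ : Type} [Fintype V] (L : LSystem V Γ) : ℕ :=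
  Fintype.card V * (L.d + 1) + 1

/-- nonterminal index of (level i, symbol B) -/
noncomputable def lsIdx (L : LSystem V Γ) (i : Fin (L.d + 1)) (B : V) : Fin (lsr L) :=
  ⟨(Fintype.equivFin V B).val + Fintype.card V * i.val, by
    have hb := (Fintype.equivFin V B).isLt
    have hi := i.isLt
    have : (Fintype.equivFin V B).val + Fintype.card V * i.val
        < Fintype.card V * (i.val + 1) := by ring_nf; omega
    have h2 : Fintype.card V * (i.val + 1) ≤ Fintype.card V * (L.d + 1) :=
      Nat.mul_le_mul_left _ (by omega)
    unfold lsr; omega⟩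

noncomputable def lsRules (L : LSystem V Γ) (A₀ : V) : Fin (lsr L) → List (Γ ⊕ Fin (lsr L)) :=
  fun k =>
    if hk : k.val < Fintype.card V * (L.d + 1) then
      if h0 : k.val < Fintype.card V then
        [Sum.inl (L.coding ((Fintype.equivFin V).symm ⟨k.val, h0⟩))]
      else
        (L.R ((Fintype.equivFin V).symm
            ⟨k.val % Fintype.card V, Nat.mod_lt _ (aux_pos hk)⟩)).map
          (fun B => Sum.inr (lsIdx L
            ⟨k.val / Fintype.card V - 1, by have := aux_div_lt hk; omega⟩ B))
    else [Sum.inr (lsIdx L ⟨L.d, Nat.lt_succ_self _⟩ A₀)]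

noncomputable def lsExp (L : LSystem V Γ) : Fin (lsr L) → List Γ := fun k =>
  if hk : k.val < Fintype.card V * (L.d + 1) then
    ((morphApply L.R)^[k.val / Fintype.card V]
      [(Fintype.equivFin V).symm ⟨k.val % Fintype.card V, Nat.mod_lt _ (aux_pos hk)⟩]).map
      L.coding
  else (L.level L.d).map L.coding

lemma lsExp_idx (L : LSystem V Γ) (i : Fin (L.d + 1)) (B : V) :
    lsExp L (lsIdx L i B) = ((morphApply L.R)^[i.val] [B]).map L.coding := by
  have hb := (Fintype.equivFin V B).isLt
  have hk : (lsIdx L i B).val < Fintype.card V * (L.d + 1) := by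
    have := (lsIdx L i B).isLt
    unfold lsr at this
    rcases Nat.lt_or_ge ((lsIdx L i B).val) (Fintype.card V * (L.d + 1)) with h | h
    · exact h
    · exfalso
      have heq : (lsIdx L i B).val = Fintype.card V * (L.d + 1) := by omega
      have hlt : (lsIdx L i B).val < Fintype.card V * (i.val + 1) := by
        show (Fintype.equivFin V B).val + Fintype.card V * i.val < _
        ring_nf; omega
      have h2 : Fintype.card V * (i.val + 1) ≤ Fintype.card V * (L.d + 1) :=
        Nat.mul_le_mul_left _ (by omega)
      omega
  rw [lsExp, dif_pos hk]
  have hval : (lsIdx L i B).val = (Fintype.equivFin V B).val + Fintype.card V * i.val := rfl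
  have hdiv : (lsIdx L i B).val / Fintype.card V = i.val := by rw [hval]; exact aux_div hb
  have hmod : (lsIdx L i B).val % Fintype.card V = (Fintype.equivFin V B).val := by
    rw [hval]; exact aux_mod hb
  have hsymm : (Fintype.equivFin V).symm
      ⟨(lsIdx L i B).val % Fintype.card V, Nat.mod_lt _ (aux_pos hk)⟩ = B := by
    have : (⟨(lsIdx L i B).val % Fintype.card V, Nat.mod_lt _ (aux_pos hk)⟩ : Fin _)
        = Fintype.equivFin V B := Fin.ext hmod
    rw [this, Equiv.symm_apply_apply]
  rw [hdiv, hsymm]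

end Construction

section Construction2
variable {V Γ : Type} [Fintype V]

lemma lsExp_eq (L : LSystem V Γ) (A₀ : V) (hax : L.ax = [A₀]) (k : Fin (lsr L)) :
    lsExp L k = (lsRules L A₀ k).flatMap (Sum.elim (fun a => [a]) (lsExp L)) := by
  by_cases hk : k.val < Fintype.card V * (L.d + 1)
  · by_cases h0 : k.val < Fintype.card V
    · -- level 0
      rw [lsRules, dif_pos hk, dif_pos h0, lsExp, dif_pos hk]
      have hdiv : k.val / Fintype.card V = 0 := Nat.div_eq_of_lt h0
      have hmod : k.val % Fintype.card V = k.val := Nat.mod_eq_of_lt h0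
      rw [hdiv]
      simp only [Function.iterate_zero, id_eq, List.map_cons, List.map_nil,
        List.flatMap_cons, List.flatMap_nil, Sum.elim_inl, List.append_nil]
      have hfin : (⟨k.val % Fintype.card V, Nat.mod_lt _ (aux_pos hk)⟩ : Fin (Fintype.card V))
          = ⟨k.val, h0⟩ := Fin.ext hmod
      rw [hfin]
    · -- level ≥ 1
      have hm : 0 < Fintype.card V := aux_pos hk
      have hi1 : 1 ≤ k.val / Fintype.card V := (Nat.one_le_div_iff hm).2 (by omega)
      set i := k.val / Fintype.card V with hidef
      set A := (Fintype.equivFin V).symm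
        ⟨k.val % Fintype.card V, Nat.mod_lt _ (aux_pos hk)⟩ with hAdef
      rw [lsRules, dif_pos hk, dif_neg h0, lsExp, dif_pos hk]
      rw [List.flatMap_map]
      simp only [Sum.elim_inr]
      have : ∀ B : V, lsExp L (lsIdx L ⟨i - 1, by have := aux_div_lt hk; omega⟩ B)
          = ((morphApply L.R)^[i-1] [B]).map L.coding := fun B => lsExp_idx L _ B
      simp only [lsExp_idx]
      rw [← List.map_flatMap, ← morphApply_iterate_flatMap]
      rw [← morphApply_single L.R A, ← Function.iterate_succ_apply]
      congr 2
      omega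
  · -- start rule
    rw [lsRules, dif_neg hk, lsExp, dif_neg hk]
    simp only [List.flatMap_cons, List.flatMap_nil, Sum.elim_inr, List.append_nil]
    rw [lsExp_idx]
    rw [LSystem.level, hax]

lemma lsWF (L : LSystem V Γ) (A₀ : V) :
    ∀ k, ∀ s ∈ lsRules L A₀ k, ∀ j : Fin (lsr L), s = Sum.inr j → (j : ℕ) < (k : ℕ) := by
  intro k s hs j hj
  subst hj
  by_cases hk : k.val < Fintype.card V * (L.d + 1)
  · by_cases h0 : k.val < Fintype.card V
    · rw [lsRules, dif_pos hk, dif_pos h0] at hs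
      simp at hs
    · rw [lsRules, dif_pos hk, dif_neg h0] at hs
      simp only [List.mem_map] at hs
      obtain ⟨B, _, hB⟩ := hs
      have hjval : j.val = (Fintype.equivFin V B).val
          + Fintype.card V * (k.val / Fintype.card V - 1) := by
        have := congrArg (fun s => Sum.elim (fun _ : Γ => (0:ℕ)) Fin.val s) hB
        simpa [lsIdx] using this.symm
      have hm : 0 < Fintype.card V := aux_pos hk
      have hb := (Fintype.equivFin V B).isLt
      have hi1 : 1 ≤ k.val / Fintype.card V := (Nat.one_le_div_iff hm).2 (by omega)
      have h1 : j.val < Fintype.card V * (k.val / Fintype.card V) := by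
        rw [hjval]
        have : Fintype.card V * (k.val / Fintype.card V - 1) + Fintype.card V
            = Fintype.card V * (k.val / Fintype.card V) := by
          rw [← Nat.mul_succ]; congr 1; omega
        omega
      have h2 : Fintype.card V * (k.val / Fintype.card V) ≤ k.val := by
        rw [mul_comm]; exact Nat.div_mul_le_self _ _
      omega
  · rw [lsRules, dif_neg hk] at hs
    simp only [List.mem_singleton, Sum.inr.injEq] at hs
    have hkval : k.val = Fintype.card V * (L.d + 1) := by
      have := k.isLt; unfold lsr at this; omega
    have hjval : j.val = (Fintype.equivFin V A₀).val + Fintype.card V * L.d := by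
      rw [hs]; rfl
    have hb := (Fintype.equivFin V A₀).isLt
    rw [hjval, hkval, Nat.mul_succ]
    omega

end Construction2


section Size
variable {V Γ : Type} [Fintype V]

lemma lsSize (L : LSystem V Γ) (A₀ : V) :
    ∑ k, (lsRules L A₀ k).length
      = Fintype.card V + L.d * (∑ A, (L.R A).length) + 1 := by
  set m := Fintype.card V with hm
  set d := L.d with hd
  have hcast : ∑ k : Fin (lsr L), (lsRules L A₀ k).length
      = ∑ k : Fin (m * (d+1) + 1), (lsRules L A₀ k).length := rfl
  rw [hcast, Fin.sum_univ_castSucc]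
  have hlast : (lsRules L A₀ (Fin.last (m * (d+1)))).length = 1 := by
    unfold lsRules; rw [dif_neg (by simp [Fin.last, hm, hd])]
    rfl
  rw [hlast]
  set e : Fin (d+1) × Fin m ≃ Fin (m * (d+1)) :=
    finProdFinEquiv.trans (finCongr (Nat.mul_comm (d+1) m)) with he
  have hsum : ∑ k : Fin (m * (d+1)), (lsRules L A₀ k.castSucc).length
      = ∑ p : Fin (d+1) × Fin m, (lsRules L A₀ ((e p).castSucc)).length :=
    (Equiv.sum_comp e
      (fun k : Fin (m*(d+1)) => (lsRules L A₀ k.castSucc).length)).symm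
  rw [hsum, Fintype.sum_prod_type]
  have hval : ∀ (i : Fin (d+1)) (j : Fin m),
      ((e (i, j)).castSucc).val = j.val + m * i.val := by
    intro i j
    simp [he, finProdFinEquiv, finCongr]
  have hterm : ∀ (i : Fin (d+1)) (j : Fin m),
      (lsRules L A₀ ((e (i, j)).castSucc)).length
        = if i.val = 0 then 1 else (L.R ((Fintype.equivFin V).symm j)).length := by
    intro i j
    have hb := j.isLt
    have hi := i.isLt
    have hk : ((e (i, j)).castSucc).val < m * (d+1) := by
      rw [hval]
      have h1 : j.val + m * i.val < m * (i.val + 1) := by ring_nf; omega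
      have h2 : m * (i.val + 1) ≤ m * (d + 1) := Nat.mul_le_mul_left _ (by omega)
      omega
    by_cases hi0 : i.val = 0
    · have h0 : ((e (i, j)).castSucc).val < m := by rw [hval, hi0]; omega
      unfold lsRules; rw [dif_pos hk, dif_pos h0, if_pos hi0]
      rfl
    · have h0 : ¬ ((e (i, j)).castSucc).val < m := by
        rw [hval]
        have : m * 1 ≤ m * i.val := Nat.mul_le_mul_left _ (by omega)
        omega
      have hfin : (⟨((e (i, j)).castSucc).val % Fintype.card V,
          Nat.mod_lt _ (aux_pos hk)⟩ : Fin (Fintype.card V)) = j :=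
        Fin.ext (by
          show ((e (i, j)).castSucc).val % Fintype.card V = j.val
          rw [hval]; exact aux_mod hb)
      unfold lsRules; rw [dif_pos hk, dif_neg h0, if_neg hi0, List.length_map, hfin]
  simp only [hterm]
  rw [Fin.sum_univ_succ]
  have hSig : ∑ j : Fin m, (L.R ((Fintype.equivFin V).symm j)).length
      = ∑ A, (L.R A).length :=
    Equiv.sum_comp (Fintype.equivFin V).symm (fun A => (L.R A).length)
  have t0 : (∑ j : Fin m, if ((0 : Fin (d+1))).val = 0 then 1
      else (L.R ((Fintype.equivFin V).symm j)).length) = m := by simp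
  have t1 : ∀ i : Fin d, (∑ j : Fin m, if ((i.succ)).val = 0 then 1
      else (L.R ((Fintype.equivFin V).symm j)).length) = ∑ A, (L.R A).length := by
    intro i
    simp only [Fin.val_succ, Nat.add_one_ne_zero, if_false]
    exact hSig
  rw [t0]
  simp only [t1]
  rw [Finset.sum_const, Finset.card_univ, Fintype.card_fin, smul_eq_mul]

end Size

/-- Well-formedness: nonempty axiom and nonempty right-hand sides. -/
def LSystem.WF {V Γ : Type} (L : LSystem V Γ) : Prop :=
  L.ax ≠ [] ∧ ∀ A, L.R A ≠ []

/-- The size of an L-system: `|S| + Σ_{A ∈ V} |R(A)|`. -/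
def LSystem.size {V Γ : Type} [Fintype V] (L : LSystem V Γ) : ℕ :=
  L.ax.length + ∑ A, (L.R A).length

/-- The L-system generates `w = τ(L_d[1,n])`, the coding applied to the
length-`n` prefix of level `d`. -/
def LGenerates {V Γ : Type} (L : LSystem V Γ) (w : List Γ) : Prop :=
  w = ((L.level L.d).take L.n).map L.coding

/-- `ℓ(w)`: the size of the smallest L-system generating `w`. -/
noncomputable def lMeasure {Γ : Type} (w : List Γ) : ℕ :=
  sInf { s | ∃ v, ∃ L : LSystem (Fin v) Γ, L.WF ∧ LGenerates L w ∧ L.size = s }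

/-- A context-free grammar (in the smallest-grammar sense) over the terminal
alphabet `T`: nonterminals `X_0, …, X_{r-1}`, one rule per nonterminal whose
right-hand side is a list of terminals (`Sum.inl`) and nonterminals
(`Sum.inr`). -/
structure CFG (T : Type) where
  r : ℕ
  rules : Fin r → List (T ⊕ Fin r)

/-- Well-formedness: each rule mentions only strictly earlier nonterminals. -/
def CFG.WF {T : Type} (G : CFG T) : Prop :=
  ∀ k, ∀ s ∈ G.rules k, ∀ j, s = Sum.inr j → (j : ℕ) < (k : ℕ)

/-- The size of a grammar: total length of the right-hand sides. -/
def CFG.size {T : Type} (G : CFG T) : ℕ := ∑ k, (G.rules k).length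

/-- The grammar generates `w`: the expansion function (terminals expand to
themselves, a nonterminal to the concatenation of the expansions of its
rule's symbols) maps the last nonterminal to `w`. -/
def CFGGenerates {T : Type} (G : CFG T) (w : List T) : Prop :=
  ∃ e : Fin G.r → List T,
    (∀ k, e k = (G.rules k).flatMap (Sum.elim (fun a => [a]) e)) ∧
    ∃ h : 0 < G.r, e ⟨G.r - 1, Nat.sub_lt h Nat.one_pos⟩ = w

/-- `g(w)`: the size of the smallest context-free grammar generating `w`. -/
noncomputable def gMeasure {T : Type} (w : List T) : ℕ :=
  sInf { s | ∃ G : CFG T, G.WF ∧ CFGGenerates G w ∧ G.size = s }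

/-- For an L-system of size ℓ whose morphism is expanding (all rules have length
≥ 2), whose axiom is a single symbol, and which generates its full coded level
(n = |L_d|, w = τ(L_d)): then d ≤ log₂ n, and there is a context-free grammar
of size at most (⌊log₂ n⌋ + 1)·ℓ generating w (hence of size O(ℓ log n)). -/
theorem expanding_lsystem_to_grammar {V Γ : Type} [Fintype V]
    (L : LSystem V Γ) (hwf : L.WF)
    (hexp : ∀ A, 2 ≤ (L.R A).length)
    (hax : L.ax.length = 1)
    (hn : L.n = (L.level L.d).length) :
    L.d ≤ Nat.log 2 L.n ∧
    ∃ G : CFG Γ, G.WF ∧ CFGGenerates G ((L.level L.d).map L.coding) ∧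
      G.size ≤ (Nat.log 2 L.n + 1) * L.size := by
  classical
  obtain ⟨A₀, hA₀⟩ : ∃ A, L.ax = [A] := List.length_eq_one_iff.mp hax
  -- growth
  have hstep : ∀ l : List V, 2 * l.length ≤ (morphApply L.R l).length := by
    intro l
    induction l with
    | nil => simp [morphApply]
    | cons a t ih =>
      have h2 := hexp a
      have : morphApply L.R (a :: t) = L.R a ++ morphApply L.R t := by
        simp [morphApply]
      rw [this, List.length_append, List.length_cons]
      omega
  have hgrow : ∀ i, 2 ^ i ≤ (L.level i).length := by
    intro i
    induction i with
    | zero => simp [LSystem.level, hA₀]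
    | succ i ih =>
      have h1 : L.level (i+1) = morphApply L.R (L.level i) := by
        rw [LSystem.level, LSystem.level, Function.iterate_succ_apply']
      rw [h1]
      have := hstep (L.level i)
      have hp : 2 ^ (i+1) = 2 * 2 ^ i := by ring
      omega
  have hnpos : L.n ≠ 0 := by
    have h1 := hgrow L.d
    have h2 : 0 < 2 ^ L.d := Nat.pow_pos (by norm_num)
    omega
  have hdlog : L.d ≤ Nat.log 2 L.n := by
    refine (Nat.le_log_iff_pow_le one_lt_two hnpos).2 ?_
    rw [hn]; exact hgrow L.d
  refine ⟨hdlog, ⟨lsr L, lsRules L A₀⟩, lsWF L A₀, ?_, ?_⟩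
  · refine ⟨lsExp L, lsExp_eq L A₀ hA₀, Nat.succ_pos _, ?_⟩
    show lsExp L ⟨lsr L - 1, _⟩ = _
    rw [lsExp, dif_neg (by show ¬ (lsr L - 1 < _); unfold lsr; omega)]
  · show CFG.size ⟨lsr L, lsRules L A₀⟩ ≤ _
    have hsz : CFG.size ⟨lsr L, lsRules L A₀⟩
        = Fintype.card V + L.d * (∑ A, (L.R A).length) + 1 := lsSize L A₀
    have hLsize : L.size = 1 + ∑ A, (L.R A).length := by rw [LSystem.size, hax]
    rw [hsz, hLsize]
    have hm_le : Fintype.card V ≤ ∑ A, (L.R A).length := by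
      calc Fintype.card V = ∑ _A : V, 1 := by simp
        _ ≤ ∑ A, (L.R A).length := Finset.sum_le_sum (fun A _ => by have := hexp A; omega)
    have hmul : L.d * (∑ A, (L.R A).length)
        ≤ Nat.log 2 L.n * (∑ A, (L.R A).length) :=
      Nat.mul_le_mul_right _ hdlog
    nlinarith [hm_le, hmul]
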